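/- Let A be a complete discrete valuation ring with uniformizer-like element t ∈ m_A nonzero, let Γ be a profinite group, M a finitely generated A-module with continuous A-linear Γ-action, and Y a finitely generated A-submodule of the continuous cohomology group H^i(Γ, M). Then the quotient H^i(Γ, M)/Y contains no nontrivial t-divisible submodule. -/

import Mathlib

section ContinuousCohomology

variable (A : Type) [CommRing A] (Γ : Type) [Group Γ] [TopologicalSpace Γ]
  (M : Type) [AddCommGroup M] [Module A M] [TopologicalSpace M] [ContinuousAdd M]
  [ContinuousConstSMul A M] [DistribMulAction Γ M] [SMulCommClass Γ A M]

/-- The inhomogeneous cochain differential on (not necessarily continuous) cochains,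
as an `A`-linear map. -/
noncomputable def cochainD (n : ℕ) : ((Fin n → Γ) → M) →ₗ[A] ((Fin (n + 1) → Γ) → M) :=
  LinearMap.pi fun g =>
    (DistribMulAction.toLinearMap A M (g 0)).comp
        (LinearMap.proj fun i : Fin n => g i.succ)
      + ∑ j : Fin n, ((-1 : ℤ) ^ ((j : ℕ) + 1)) •
          LinearMap.proj (R := A) (φ := fun _ : Fin n → Γ => M)
            (fun i : Fin n =>
              if (i : ℕ) < (j : ℕ) then g i.castSucc
              else if i = j then g i.castSucc * g i.succ else g i.succ)
      + ((-1 : ℤ) ^ (n + 1)) •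
          LinearMap.proj (R := A) (φ := fun _ : Fin n → Γ => M)
            (fun i : Fin n => g i.castSucc)

/-- The submodule of continuous cochains. -/
def contCochains (n : ℕ) : Submodule A ((Fin n → Γ) → M) where
  carrier := {f | Continuous f}
  add_mem' := fun hf hg => hf.add hg
  zero_mem' := continuous_const
  smul_mem' := fun a _ hf => hf.const_smul a

/-- Continuous cocycles. -/
noncomputable def contCocycles (n : ℕ) : Submodule A ((Fin n → Γ) → M) :=
  contCochains A Γ M n ⊓ LinearMap.ker (cochainD A Γ M n)

/-- Coboundaries of continuous cochains. -/
noncomputable def contCoboundaries : (n : ℕ) → Submodule A ((Fin n → Γ) → M)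
  | 0 => ⊥
  | (n + 1) => Submodule.map (cochainD A Γ M n) (contCochains A Γ M n)

/-- Continuous (cochain) group cohomology `H^n(Γ, M)`, an `A`-module. -/
noncomputable abbrev ContinuousCohomology (n : ℕ) :=
  contCocycles A Γ M n ⧸
    (Submodule.comap (contCocycles A Γ M n).subtype (contCoboundaries A Γ M n))

end ContinuousCohomology


section TateHelpers

variable {A : Type} [CommRing A]

lemma mem_spanpow_iff {M : Type} [AddCommGroup M] [Module A M] (t : A) (k : ℕ) (x : M) :
    x ∈ (Ideal.span {t} ^ k • ⊤ : Submodule A M) ↔ ∃ y, x = t ^ k • y := by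
  constructor
  · intro h
    rw [Ideal.span_singleton_pow] at h
    refine Submodule.smul_induction_on h ?_ ?_
    · rintro r hr n -
      obtain ⟨c, rfl⟩ := Ideal.mem_span_singleton'.mp hr
      exact ⟨c • n, by rw [mul_comm, mul_smul, smul_comm]⟩
    · rintro x y ⟨x', rfl⟩ ⟨y', rfl⟩
      exact ⟨x' + y', (smul_add _ _ _).symm⟩
  · rintro ⟨y, rfl⟩
    exact Submodule.smul_mem_smul
      (Ideal.pow_mem_pow (Ideal.mem_span_singleton_self t) k) trivial

lemma exists_span_eq_pow_maximalIdeal (A : Type) [CommRing A] [IsDomain A]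
    [IsDiscreteValuationRing A] (t : A) (ht0 : t ≠ 0) (ht : t ∈ IsLocalRing.maximalIdeal A) :
    ∃ s : ℕ, 1 ≤ s ∧ Ideal.span {t} = IsLocalRing.maximalIdeal A ^ s := by
  obtain ⟨π, hπ⟩ := IsDiscreteValuationRing.exists_irreducible A
  obtain ⟨s, hs⟩ := IsDiscreteValuationRing.ideal_eq_span_pow_irreducible
      (s := Ideal.span {t}) (by simpa using ht0) hπ
  have hmax : IsLocalRing.maximalIdeal A = Ideal.span {π} :=
    (IsDiscreteValuationRing.irreducible_iff_uniformizer π).mp hπ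
  refine ⟨s, ?_, by rw [hmax, Ideal.span_singleton_pow, hs]⟩
  by_contra hcon
  have hs0 : s = 0 := by omega
  rw [hs0, pow_zero] at hs
  have htop : Ideal.span {t} = ⊤ := by rw [hs, Ideal.span_singleton_one]
  exact (IsLocalRing.mem_maximalIdeal t).mp ht (Ideal.span_singleton_eq_top.mp htop)
variable {A : Type} [CommRing A]

lemma tele {M : Type} [AddCommGroup M] [Module A M] {t : A} {g : ℕ → M}
    (hg : ∀ n, ∃ y, g (n + 1) - g n = t ^ n • y) :
    ∀ k n, k ≤ n → ∃ y, g n - g k = t ^ k • y := by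
  intro k n hkn
  induction n with
  | zero =>
      have : k = 0 := Nat.le_zero.mp hkn
      subst this
      exact ⟨0, by simp⟩
  | succ n ih =>
      rcases Nat.lt_or_ge k (n + 1) with h | h
      · have hk : k ≤ n := by omega
        obtain ⟨y₁, hy₁⟩ := ih hk
        obtain ⟨y₂, hy₂⟩ := hg n
        refine ⟨t ^ (n - k) • y₂ + y₁, ?_⟩
        have hsplit : g (n + 1) - g k = (g (n + 1) - g n) + (g n - g k) := by abel
        rw [hsplit, hy₁, hy₂, smul_add, smul_smul, ← pow_add, Nat.add_sub_cancel' hk]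
      · have : k = n + 1 := by omega
        subst this
        exact ⟨0, by simp⟩

lemma texists_limit [IsLocalRing A] {t : A} {s : ℕ} (hs1 : 1 ≤ s)
    (hspan : Ideal.span {t} = IsLocalRing.maximalIdeal A ^ s)
    {M : Type} [AddCommGroup M] [Module A M]
    (hpre : IsPrecomplete (IsLocalRing.maximalIdeal A) M)
    (g : ℕ → M) (hg : ∀ n, ∃ y, g (n + 1) - g n = t ^ n • y) :
    ∃ L, ∀ n, ∃ y, L - g n = t ^ n • y := by
  have hmem : ∀ (k : ℕ) (x : M), (∃ y, x = t ^ k • y) ↔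
      x ∈ (IsLocalRing.maximalIdeal A ^ (s * k) • ⊤ : Submodule A M) := by
    intro k x
    rw [pow_mul, ← hspan, mem_spanpow_iff]
  have hcau : ∀ {a b : ℕ}, a ≤ b →
      g a ≡ g b [SMOD (IsLocalRing.maximalIdeal A ^ a • ⊤ : Submodule A M)] := by
    intro a b hab
    rw [SModEq.sub_mem]
    obtain ⟨y, hy⟩ := tele hg a b hab
    have hxy : g a - g b = t ^ a • (-y) := by rw [smul_neg, ← hy]; abel
    have h1 : g a - g b ∈ (IsLocalRing.maximalIdeal A ^ (s * a) • ⊤ : Submodule A M) :=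
      (hmem a _).mp ⟨-y, hxy⟩
    exact Submodule.smul_mono_left (Ideal.pow_le_pow_right (by nlinarith)) h1
  obtain ⟨L, hL⟩ := hpre.prec fun {a b} h => hcau h
  refine ⟨L, fun k => ?_⟩
  have h1 : L - g (s * k) ∈ (IsLocalRing.maximalIdeal A ^ (s * k) • ⊤ : Submodule A M) := by
    have h2 := (hL (s * k)).symm
    rw [SModEq.sub_mem] at h2
    exact h2
  obtain ⟨y₁, hy₁⟩ := (hmem k _).mpr h1
  obtain ⟨y₂, hy₂⟩ := tele hg k (s * k) (by nlinarith)
  refine ⟨y₁ + y₂, ?_⟩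
  have hsplit : L - g k = (L - g (s * k)) + (g (s * k) - g k) := by abel
  rw [hsplit, hy₁, hy₂, smul_add]
/-- Linear combination map. -/
noncomputable def mypi {A : Type} [CommRing A] {M : Type} [AddCommGroup M] [Module A M]
    {k : ℕ} (f : Fin k → M) : (Fin k → A) →ₗ[A] M where
  toFun a := ∑ j, a j • f j
  map_add' a b := by simp [add_smul, Finset.sum_add_distrib]
  map_smul' c a := by simp [mul_smul, Finset.smul_sum]

lemma Mlimit [IsLocalRing A] {t : A} {s : ℕ} (hs1 : 1 ≤ s)
    (hspan : Ideal.span {t} = IsLocalRing.maximalIdeal A ^ s)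
    [IsAdicComplete (IsLocalRing.maximalIdeal A) A]
    {M : Type} [AddCommGroup M] [Module A M] [Module.Finite A M]
    (g : ℕ → M) (hg : ∀ n, ∃ y, g (n + 1) - g n = t ^ n • y) :
    ∃ L, ∀ n, ∃ y, L - g n = t ^ n • y := by
  obtain ⟨k, f, hf⟩ := Module.Finite.exists_fin (R := A) (M := M)
  set π := mypi (A := A) f with hπ
  have hsurj : ∀ x : M, ∃ a, π a = x := by
    intro x
    obtain ⟨a, ha⟩ := (Submodule.mem_span_range_iff_exists_fun A).mp (hf ▸ Submodule.mem_top (x := x))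
    exact ⟨a, ha⟩
  choose y hy using hg
  choose e he using fun n => hsurj (y n)
  obtain ⟨e0, he0⟩ := hsurj (g 0)
  set G : ℕ → Fin k → A := fun n => e0 + ∑ j ∈ Finset.range n, t ^ j • e j with hG
  have hGsucc : ∀ n, G (n + 1) - G n = t ^ n • e n := by
    intro n
    simp only [hG, Finset.sum_range_succ]
    abel
  have hπG : ∀ n, π (G n) = g n := by
    intro n
    induction n with
    | zero => simp [hG, he0]
    | succ n ih =>
        have h1 : G (n + 1) = G n + t ^ n • e n := by rw [← hGsucc n]; abel
        have h2 : g (n + 1) = g n + t ^ n • y n := by rw [← hy n]; abel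
        rw [h1, map_add, ih, map_smul, he, h2]
  have hcomp : ∀ i : Fin k, ∃ L, ∀ n, ∃ z, L - G n i = t ^ n • z := by
    intro i
    refine texists_limit hs1 hspan inferInstance (fun n => G n i) (fun n => ⟨e n i, ?_⟩)
    have := congrFun (hGsucc n) i
    simpa using this
  choose Lc w hw using hcomp
  refine ⟨π Lc, fun n => ?_⟩
  have hvec : Lc - G n = t ^ n • fun i => w i n := by
    funext i
    simpa using hw i n
  refine ⟨π fun i => w i n, ?_⟩
  rw [← hπG n, ← map_sub, hvec, map_smul]

lemma MHaus [IsLocalRing A] [IsNoetherianRing A] {t : A}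
    (ht : t ∈ IsLocalRing.maximalIdeal A)
    {M : Type} [AddCommGroup M] [Module A M] [Module.Finite A M]
    (x : M) (hx : ∀ n, ∃ y, x = t ^ n • y) : x = 0 := by
  have hbot := Ideal.iInf_pow_smul_eq_bot_of_isLocalRing
    (I := IsLocalRing.maximalIdeal A) (M := M) (IsLocalRing.maximalIdeal.isMaximal A).ne_top
  have : x ∈ (⨅ n : ℕ, IsLocalRing.maximalIdeal A ^ n • ⊤ : Submodule A M) := by
    rw [Submodule.mem_iInf]
    intro n
    obtain ⟨y, rfl⟩ := hx n
    exact Submodule.smul_mem_smul (Ideal.pow_mem_pow ht n) trivial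
  rw [hbot] at this
  simpa using this
section FunHelpers

variable {A : Type} [CommRing A] {X : Type} [TopologicalSpace X]
  {M : Type} [AddCommGroup M] [Module A M] [TopologicalSpace M]

lemma cont_limit {t : A}
    (hadic : ∀ s : Set M, IsOpen s ↔ ∀ m ∈ s, ∃ n : ℕ,
      {y : M | y - m ∈ (Ideal.span {t} ^ n) • (⊤ : Submodule A M)} ⊆ s)
    (f : ℕ → X → M) (hf : ∀ n, Continuous (f n)) (L : X → M)
    (hL : ∀ n, ∃ g : X → M, L - f n = t ^ n • g) : Continuous L := by
  rw [continuous_def]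
  intro s hs
  rw [isOpen_iff_forall_mem_open]
  intro x₀ hx₀
  obtain ⟨n, hball⟩ := (hadic s).mp hs (L x₀) hx₀
  have hballopen : ∀ v : M,
      IsOpen {y : M | y - v ∈ (Ideal.span {t} ^ n) • (⊤ : Submodule A M)} := by
    intro v
    rw [hadic]
    intro m hm
    refine ⟨n, fun y hy => ?_⟩
    have : y - v = (y - m) + (m - v) := by abel
    rw [Set.mem_setOf_eq, this]
    exact Submodule.add_mem _ hy hm
  have hLf : ∀ m x, L x - f m x ∈ (Ideal.span {t} ^ m) • (⊤ : Submodule A M) := by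
    intro m x
    obtain ⟨g, hg⟩ := hL m
    rw [mem_spanpow_iff]
    exact ⟨g x, by have := congrFun hg x; simpa using this⟩
  refine ⟨f n ⁻¹' {y : M | y - f n x₀ ∈ (Ideal.span {t} ^ n) • (⊤ : Submodule A M)},
    fun x hx => ?_, (hf n).isOpen_preimage _ (hballopen _), by simp⟩
  apply hball
  have : L x - L x₀ = (L x - f n x) + (f n x - f n x₀) + (f n x₀ - L x₀) := by abel
  rw [Set.mem_setOf_eq, this]
  refine Submodule.add_mem _ (Submodule.add_mem _ (hLf n x) hx) ?_
  have h3 := hLf n x₀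
  have : f n x₀ - L x₀ = -(L x₀ - f n x₀) := by abel
  rw [this]
  exact Submodule.neg_mem _ h3

lemma fun_complete [IsLocalRing A] {t : A} {s : ℕ} (hs1 : 1 ≤ s)
    (hspan : Ideal.span {t} = IsLocalRing.maximalIdeal A ^ s)
    [IsAdicComplete (IsLocalRing.maximalIdeal A) A] [Module.Finite A M]
    (hadic : ∀ s : Set M, IsOpen s ↔ ∀ m ∈ s, ∃ n : ℕ,
      {y : M | y - m ∈ (Ideal.span {t} ^ n) • (⊤ : Submodule A M)} ⊆ s)
    (f : ℕ → X → M) (hf : ∀ n, Continuous (f n))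
    (hcau : ∀ n, ∃ g : X → M, f (n + 1) - f n = t ^ n • g) :
    ∃ L : X → M, Continuous L ∧ ∀ n, ∃ g : X → M, L - f n = t ^ n • g := by
  choose g hg using hcau
  have hptw : ∀ x : X, ∃ Lx : M, ∀ n, ∃ y, Lx - f n x = t ^ n • y := by
    intro x
    refine Mlimit hs1 hspan (fun n => f n x) (fun n => ⟨g n x, ?_⟩)
    have := congrFun (hg n) x
    simpa using this
  choose L hL using hptw
  choose w hw using fun x n => hL x n
  have hLf : ∀ n, ∃ g : X → M, L - f n = t ^ n • g := by
    intro n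
    refine ⟨fun x => w x n, ?_⟩
    funext x
    simpa using hw x n
  exact ⟨L, cont_limit hadic f hf L hLf, hLf⟩

lemma funHaus [IsLocalRing A] [IsNoetherianRing A] {t : A}
    (ht : t ∈ IsLocalRing.maximalIdeal A) [Module.Finite A M]
    (q : X → M) (hq : ∀ n, ∃ g : X → M, q = t ^ n • g) : q = 0 := by
  funext x
  refine MHaus ht (q x) (fun n => ?_)
  obtain ⟨g, hg⟩ := hq n
  exact ⟨g x, by have := congrFun hg x; simpa using this⟩

end FunHelpers
lemma tate_core {A : Type} [CommRing A] (t : A) {P Q : Type} [AddCommGroup P] [Module A P]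
    [AddCommGroup Q] [Module A Q] (φ : P →ₗ[A] Q) (S : Submodule A P)
    {m : ℕ} (u : Fin m → Q) (z : ℕ → Q) (p : ℕ → P) (a : ℕ → Fin m → A)
    (hp : ∀ n, p n ∈ S)
    (hrec : ∀ n, z n = t • z (n + 1) + φ (p n) + ∑ j, a n j • u j)
    (hScomp : ∀ g : ℕ → P, (∀ n, g n ∈ S) → (∀ n, ∃ y, g (n + 1) - g n = t ^ n • y) →
        ∃ L, L ∈ S ∧ ∀ n, ∃ y, L - g n = t ^ n • y)
    (hA : ∀ g : ℕ → A, (∀ n, ∃ y, g (n + 1) - g n = t ^ n • y) →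
        ∃ α, ∀ n, ∃ y, α - g n = t ^ n • y)
    (hQ : ∀ q : Q, (∀ n, ∃ y, q = t ^ n • y) → q = 0) :
    ∃ c ∈ S, ∃ α : Fin m → A, z 0 = φ c + ∑ j, α j • u j := by
  set sp : ℕ → P := fun N => ∑ n ∈ Finset.range N, t ^ n • p n with hsp
  set b : Fin m → ℕ → A := fun j N => ∑ n ∈ Finset.range N, t ^ n * a n j with hb
  have claim : ∀ N, z 0 = t ^ N • z N + φ (sp N) + ∑ j, b j N • u j := by
    intro N
    induction N with
    | zero => simp [hsp, hb]
    | succ N ih =>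
        rw [ih, hrec N]
        have h1 : sp (N + 1) = sp N + t ^ N • p N := by
          simp [hsp, Finset.sum_range_succ]
        have h2 : ∀ j, b j (N + 1) = b j N + t ^ N * a N j := by
          intro j; simp [hb, Finset.sum_range_succ]
        rw [h1, map_add, map_smul]
        have h3 : (∑ j, b j (N + 1) • u j) = (∑ j, b j N • u j) + ∑ j, (t ^ N * a N j) • u j := by
          rw [← Finset.sum_add_distrib]
          refine Finset.sum_congr rfl fun j _ => ?_
          rw [h2 j, add_smul]
        rw [h3]
        have h4 : t ^ N • (t • z (N + 1) + φ (p N) + ∑ j, a N j • u j)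
            = t ^ (N + 1) • z (N + 1) + t ^ N • φ (p N) + ∑ j, (t ^ N * a N j) • u j := by
          rw [smul_add, smul_add, smul_smul, ← pow_succ, Finset.smul_sum]
          congr 1
          refine Finset.sum_congr rfl fun j _ => ?_
          rw [smul_smul]
        rw [h4]
        abel
  have hspS : ∀ N, sp N ∈ S :=
    fun N => Submodule.sum_mem _ fun n _ => Submodule.smul_mem _ _ (hp n)
  have hspc : ∀ N, ∃ y, sp (N + 1) - sp N = t ^ N • y := by
    intro N
    exact ⟨p N, by simp [hsp, Finset.sum_range_succ]⟩
  obtain ⟨c, hcS, hc⟩ := hScomp sp hspS hspc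
  have hαj : ∀ j : Fin m, ∃ α, ∀ n, ∃ y, α - b j n = t ^ n • y := by
    intro j
    exact hA (b j) fun n => ⟨a n j, by simp [hb, Finset.sum_range_succ, smul_eq_mul]⟩
  choose α hα using hαj
  refine ⟨c, hcS, α, ?_⟩
  have key : z 0 - (φ c + ∑ j, α j • u j) = 0 := by
    apply hQ
    intro N
    obtain ⟨yc, hyc⟩ := hc N
    choose yj hyj using fun j => hα j N
    refine ⟨z N - φ yc - ∑ j, yj j • u j, ?_⟩
    rw [claim N]
    have e1 : t ^ N • (z N - φ yc - ∑ j, yj j • u j)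
        = t ^ N • z N - φ (t ^ N • yc) - ∑ j, (t ^ N • yj j) • u j := by
      rw [smul_sub, smul_sub, map_smul, Finset.smul_sum]
      congr 1
      refine Finset.sum_congr rfl fun j _ => ?_
      rw [smul_smul, smul_eq_mul]
    rw [e1, ← hyc]
    have e2 : ∀ j, (t ^ N • yj j) • u j = (α j - b j N) • u j := by
      intro j; rw [← hyj j]
    rw [Finset.sum_congr rfl fun j _ => e2 j]
    have e3 : (∑ j, (α j - b j N) • u j) = (∑ j, α j • u j) - ∑ j, b j N • u j := by
      rw [← Finset.sum_sub_distrib]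
      refine Finset.sum_congr rfl fun j _ => ?_
      rw [sub_smul]
    rw [e3, map_sub]
    abel
  have := sub_eq_zero.mp key
  exact this

end TateHelpers

/-- **No nontrivial `t`-divisible submodules in quotients of continuous cohomology.**
Let `A` be a complete discrete valuation ring, `t ∈ 𝔪_A` nonzero, `Γ` a profinite group and
`M` a finitely generated `A`-module, endowed with its `t`-adic topology and a continuous
`A`-linear `Γ`-action.  If `Y` is a finitely generated `A`-submodule of the continuous
cohomology `H^i(Γ, M)`, then `H^i(Γ, M) / Y` contains no nontrivial `t`-divisible
submodule. -/
theorem no_divisible_submodule_in_quotient_of_continuousCohomology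
    (A : Type) [CommRing A] [IsDomain A] [IsDiscreteValuationRing A]
    [IsAdicComplete (IsLocalRing.maximalIdeal A) A]
    (t : A) (ht0 : t ≠ 0) (ht : t ∈ IsLocalRing.maximalIdeal A)
    (Γ : Type) [Group Γ] [TopologicalSpace Γ] [IsTopologicalGroup Γ]
    [CompactSpace Γ] [T2Space Γ] [TotallyDisconnectedSpace Γ]
    (M : Type) [AddCommGroup M] [Module A M] [Module.Finite A M]
    [TopologicalSpace M] [ContinuousAdd M] [ContinuousConstSMul A M]
    [DistribMulAction Γ M] [SMulCommClass Γ A M] [ContinuousSMul Γ M]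
    (hadic : ∀ s : Set M, IsOpen s ↔ ∀ m ∈ s, ∃ n : ℕ,
      {y : M | y - m ∈ (Ideal.span {t} ^ n) • (⊤ : Submodule A M)} ⊆ s)
    (i : ℕ) (Y : Submodule A (ContinuousCohomology A Γ M i)) (hY : Y.FG) :
    ∀ N : Submodule A ((ContinuousCohomology A Γ M i) ⧸ Y),
      (∀ x ∈ N, ∃ y ∈ N, x = t • y) → N = ⊥ := by
  intro N hdiv
  rw [eq_bot_iff]
  intro x hx
  rw [Submodule.mem_bot]
  obtain ⟨s, hs1, hspan⟩ := exists_span_eq_pow_maximalIdeal A t ht0 ht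
  -- a `t`-divisible sequence in `N` starting at `x`
  have hstep : ∀ v : {v : (ContinuousCohomology A Γ M i) ⧸ Y // v ∈ N},
      ∃ w : {v : (ContinuousCohomology A Γ M i) ⧸ Y // v ∈ N},
        (v : (ContinuousCohomology A Γ M i) ⧸ Y)
          = t • (w : (ContinuousCohomology A Γ M i) ⧸ Y) := by
    intro v
    obtain ⟨y, hyN, hy⟩ := hdiv v v.2
    exact ⟨⟨y, hyN⟩, hy⟩
  choose F hF using hstep
  set seq : ℕ → {v : (ContinuousCohomology A Γ M i) ⧸ Y // v ∈ N} :=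
    fun n => F^[n] ⟨x, hx⟩ with hseqdef
  have hseq0 : (seq 0 : (ContinuousCohomology A Γ M i) ⧸ Y) = x := rfl
  have hseqstep : ∀ n, (seq n : (ContinuousCohomology A Γ M i) ⧸ Y) = t • (seq (n + 1) : _) := by
    intro n
    have h1 : seq (n + 1) = F (seq n) := by
      rw [hseqdef]
      exact Function.iterate_succ_apply' F n _
    rw [h1]
    exact hF (seq n)
  -- lift the sequence to `H := ContinuousCohomology A Γ M i`
  choose h hh using fun n => Submodule.Quotient.mk_surjective Y (seq n : _)
  have hhY : ∀ n, h n - t • h (n + 1) ∈ Y := by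
    intro n
    rw [← (Submodule.Quotient.mk_eq_zero Y)]
    have : Submodule.Quotient.mk (p := Y) (h n - t • h (n + 1))
        = Submodule.Quotient.mk (p := Y) (h n) - t • Submodule.Quotient.mk (p := Y) (h (n + 1)) := by
      rw [Submodule.Quotient.mk_sub, Submodule.Quotient.mk_smul]
    rw [this, hh n, hh (n + 1), hseqstep n, sub_self]
  -- generators of `Y`
  obtain ⟨m, v, hvspan⟩ := Submodule.fg_iff_exists_fin_generating_family.mp hY
  have hmem : ∀ n, h n - t • h (n + 1) ∈ Submodule.span A (Set.range v) := by
    intro n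
    rw [hvspan]
    exact hhY n
  choose a ha using fun n => (Submodule.mem_span_range_iff_exists_fun A).mp (hmem n)
  -- lift to cocycles
  choose w hw using fun n => Submodule.Quotient.mk_surjective
    (Submodule.comap (contCocycles A Γ M i).subtype (contCoboundaries A Γ M i)) (h n)
  choose vt hvt using fun j => Submodule.Quotient.mk_surjective
    (Submodule.comap (contCocycles A Γ M i).subtype (contCoboundaries A Γ M i)) (v j)
  have hK : ∀ n, w n - t • w (n + 1) - ∑ j, a n j • vt j ∈
      Submodule.comap (contCocycles A Γ M i).subtype (contCoboundaries A Γ M i) := by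
    intro n
    rw [← Submodule.Quotient.mk_eq_zero]
    have heq : Submodule.Quotient.mk
          (p := Submodule.comap (contCocycles A Γ M i).subtype (contCoboundaries A Γ M i))
          (w n - t • w (n + 1) - ∑ j, a n j • vt j)
        = h n - t • h (n + 1) - ∑ j, a n j • v j := by
      have h2 : Submodule.Quotient.mk
            (p := Submodule.comap (contCocycles A Γ M i).subtype (contCoboundaries A Γ M i))
            (w n - t • w (n + 1) - ∑ j, a n j • vt j)
          = (Submodule.comap (contCocycles A Γ M i).subtype
              (contCoboundaries A Γ M i)).mkQ (w n - t • w (n + 1) - ∑ j, a n j • vt j) := rfl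
      rw [h2]
      simp only [map_sub, map_smul, map_sum, Submodule.mkQ_apply, hw, hvt]
    rw [heq, ha n, sub_self]
  have hcobd : ∀ n, ((w n : (Fin i → Γ) → M)) - t • ((w (n + 1) : (Fin i → Γ) → M))
      - ∑ j, a n j • ((vt j : (Fin i → Γ) → M)) ∈ contCoboundaries A Γ M i := by
    intro n
    have h1 := hK n
    rw [Submodule.mem_comap] at h1
    simpa [map_sub, map_smul, map_sum] using h1
  -- the heart of the matter
  have hend : ∃ α : Fin m → A, ((w 0 : (Fin i → Γ) → M))
      - ∑ j, α j • ((vt j : (Fin i → Γ) → M)) ∈ contCoboundaries A Γ M i := by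
    have hA : ∀ g : ℕ → A, (∀ n, ∃ y, g (n + 1) - g n = t ^ n • y) →
        ∃ α, ∀ n, ∃ y, α - g n = t ^ n • y :=
      fun g hg => texists_limit hs1 hspan inferInstance g hg
    cases i with
    | zero =>
        have hbd : ∀ n, ((w n : (Fin 0 → Γ) → M)) = t • ((w (n + 1) : (Fin 0 → Γ) → M))
            + (0 : M →ₗ[A] ((Fin 0 → Γ) → M)) 0 + ∑ j, a n j • ((vt j : (Fin 0 → Γ) → M)) := by
          intro n
          have h1 := hcobd n
          rw [show contCoboundaries A Γ M 0 = ⊥ from rfl, Submodule.mem_bot, sub_eq_zero] at h1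
          rw [sub_eq_iff_eq_add] at h1
          rw [h1]
          simp
          abel
        obtain ⟨c, hcS, α, hα⟩ := tate_core t (0 : M →ₗ[A] ((Fin 0 → Γ) → M))
          (⊥ : Submodule A M) (fun j => ((vt j : (Fin 0 → Γ) → M)))
          (fun n => ((w n : (Fin 0 → Γ) → M))) (fun _ => 0) a
          (fun n => Submodule.zero_mem _) hbd
          (fun g hgS hgc => ⟨0, Submodule.zero_mem _, fun n => ⟨0, by
            rw [(Submodule.mem_bot A).mp (hgS n)]
            simp⟩⟩)
          hA
          (funHaus ht)
        refine ⟨α, ?_⟩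
        rw [show contCoboundaries A Γ M 0 = ⊥ from rfl, Submodule.mem_bot, sub_eq_zero, hα]
        simp
    | succ ii =>
        have hmap : ∀ n, ∃ p, p ∈ contCochains A Γ M ii ∧ cochainD A Γ M ii p
            = ((w n : (Fin (ii+1) → Γ) → M)) - t • ((w (n + 1) : (Fin (ii+1) → Γ) → M))
              - ∑ j, a n j • ((vt j : (Fin (ii+1) → Γ) → M)) := by
          intro n
          have h1 := hcobd n
          rw [show contCoboundaries A Γ M (ii+1)
            = Submodule.map (cochainD A Γ M ii) (contCochains A Γ M ii) from rfl] at h1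
          obtain ⟨p, hp1, hp2⟩ := h1
          exact ⟨p, hp1, hp2⟩
        choose pc hpcS hpc using hmap
        have hbd : ∀ n, ((w n : (Fin (ii+1) → Γ) → M)) =
            t • ((w (n + 1) : (Fin (ii+1) → Γ) → M)) + cochainD A Γ M ii (pc n)
            + ∑ j, a n j • ((vt j : (Fin (ii+1) → Γ) → M)) := by
          intro n
          have h1 := hpc n
          rw [eq_comm, sub_sub, sub_eq_iff_eq_add] at h1
          rw [h1]
          abel
        obtain ⟨c, hcS, α, hα⟩ := tate_core t (cochainD A Γ M ii)
          (contCochains A Γ M ii) (fun j => ((vt j : (Fin (ii+1) → Γ) → M)))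
          (fun n => ((w n : (Fin (ii+1) → Γ) → M))) pc a hpcS hbd
          (fun g hgS hgc => fun_complete hs1 hspan hadic g (fun n => hgS n) hgc)
          hA
          (funHaus ht)
        refine ⟨α, ?_⟩
        rw [show contCoboundaries A Γ M (ii+1)
          = Submodule.map (cochainD A Γ M ii) (contCochains A Γ M ii) from rfl]
        rw [hα, add_sub_cancel_right]
        exact Submodule.mem_map_of_mem hcS
  obtain ⟨α, hα⟩ := hend
  have hWK : w 0 - ∑ j, α j • vt j ∈
      Submodule.comap (contCocycles A Γ M i).subtype (contCoboundaries A Γ M i) := by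
    rw [Submodule.mem_comap]
    simpa [map_sub, map_sum, map_smul] using hα
  have hh0 : h 0 = ∑ j, α j • v j := by
    have h1 : Submodule.Quotient.mk
        (p := Submodule.comap (contCocycles A Γ M i).subtype (contCoboundaries A Γ M i))
        (w 0 - ∑ j, α j • vt j) = 0 := (Submodule.Quotient.mk_eq_zero _).mpr hWK
    have h2 : Submodule.Quotient.mk
          (p := Submodule.comap (contCocycles A Γ M i).subtype (contCoboundaries A Γ M i))
          (w 0 - ∑ j, α j • vt j)
        = (Submodule.comap (contCocycles A Γ M i).subtype
            (contCoboundaries A Γ M i)).mkQ (w 0 - ∑ j, α j • vt j) := rfl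
    rw [h2] at h1
    simp only [map_sub, map_smul, map_sum, Submodule.mkQ_apply, hw, hvt, sub_eq_zero] at h1
    exact h1
  have hh0Y : h 0 ∈ Y := by
    rw [hh0]
    exact Submodule.sum_mem _ fun j _ => Submodule.smul_mem _ _
      (hvspan ▸ Submodule.subset_span ⟨j, rfl⟩)
  rw [← hseq0, ← hh 0]
  exact (Submodule.Quotient.mk_eq_zero Y).mpr hh0Y
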